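/- Let R¹, R², Y be independent random variables with R¹ ~ Gamma(μ+λ, β), R² ~ InverseBeta(λ, μ), Y ~ Gamma(μ, β), where λ, μ, β > 0. Then (Y + R¹/R², Y·R²/R¹ + 1) has the same distribution as (R¹, R²). (Invariance of the strict-weak/gamma model under T^{h,Y} with h(y) = 1.) -/

import Mathlib

open MeasureTheory ProbabilityTheory Set
open scoped ENNReal

noncomputable def gpdf (a b x : ℝ) : ℝ :=
  if 0 < x then (Real.Gamma a)⁻¹ * b ^ a * x ^ (a - 1) * Real.exp (-(b * x)) else 0

noncomputable def bpdf (a b x : ℝ) : ℝ :=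
  if 0 < x ∧ x < 1 then
    (Real.Gamma (a + b) / (Real.Gamma a * Real.Gamma b)) * x ^ (a - 1) * (1 - x) ^ (b - 1)
  else 0

-- real density identity
lemma density_id {l m b a y : ℝ} (hl : 0 < l) (hm : 0 < m) (hb : 0 < b)
    (ha : 0 < a) (hy : 0 < y) :
    gpdf l b a * gpdf m b y
      = (a + y)⁻¹ * (gpdf (m + l) b (a + y) * bpdf l m (a / (a + y))) := by
  have hu : 0 < a + y := by linarith
  have hv0 : 0 < a / (a + y) := div_pos ha hu
  have hv1 : a / (a + y) < 1 := (div_lt_one hu).2 (by linarith)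
  have h1 : 1 - a / (a + y) = y / (a + y) := by field_simp; ring
  rw [gpdf, gpdf, gpdf, bpdf, if_pos ha, if_pos hy, if_pos hu, if_pos ⟨hv0, hv1⟩, h1]
  have hGl := Real.Gamma_pos_of_pos hl
  have hGm := Real.Gamma_pos_of_pos hm
  have hGlm := Real.Gamma_pos_of_pos (by linarith : (0:ℝ) < m + l)
  have hbl : b ^ l * b ^ m = b ^ (m + l) := by
    rw [← Real.rpow_add hb]; ring_nf
  have hu2 : (a + y) ^ (m + l - 1) = (a + y) ^ (l - 1) * (a + y) ^ (m - 1) * (a + y) := by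
    rw [← Real.rpow_add hu, ← Real.rpow_add_one hu.ne']; ring_nf
  have hda : (a / (a + y)) ^ (l - 1) = a ^ (l - 1) / (a + y) ^ (l - 1) :=
    Real.div_rpow ha.le hu.le _
  have hdy : (y / (a + y)) ^ (m - 1) = y ^ (m - 1) / (a + y) ^ (m - 1) :=
    Real.div_rpow hy.le hu.le _
  have hexp : Real.exp (-(b * a)) * Real.exp (-(b * y)) = Real.exp (-(b * (a + y))) := by
    rw [← Real.exp_add]; ring_nf
  have hGamma : Real.Gamma (l + m) = Real.Gamma (m + l) := by rw [add_comm]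
  have hup1 : (0:ℝ) < (a + y) ^ (l - 1) := Real.rpow_pos_of_pos hu _
  have hup2 : (0:ℝ) < (a + y) ^ (m - 1) := Real.rpow_pos_of_pos hu _
  rw [hda, hdy, hu2, hGamma, ← hbl, ← hexp]
  field_simp





lemma measurable_gpdf (a b : ℝ) : Measurable (gpdf a b) := by
  unfold gpdf
  exact Measurable.ite measurableSet_Ioi (by fun_prop) measurable_const

lemma measurable_bpdf (a b : ℝ) : Measurable (bpdf a b) := by
  unfold bpdf
  refine Measurable.ite ?_ (by fun_prop) measurable_const
  exact (measurableSet_Ioi (a := (0:ℝ))).inter (measurableSet_Iio (a := (1:ℝ)))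

lemma gpdf_eq_zero {a b x : ℝ} (hx : ¬ 0 < x) : gpdf a b x = 0 := if_neg hx
lemma bpdf_eq_zero {a b x : ℝ} (hx : ¬ (0 < x ∧ x < 1)) : bpdf a b x = 0 := if_neg hx

noncomputable def chi (p : ℝ × ℝ) : ℝ × ℝ := (p.1 + p.2, p.1 / (p.1 + p.2))

lemma chi_injOn : InjOn chi (Ioi (0:ℝ) ×ˢ Ioi (0:ℝ)) := by
  rintro ⟨a, y⟩ ⟨ha, hy⟩ ⟨a', y'⟩ ⟨ha', hy'⟩ h
  simp only [chi, Prod.mk.injEq] at h ha hy ha' hy' ⊢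
  obtain ⟨h1, h2⟩ := h
  simp only [mem_Ioi] at ha hy ha' hy'
  have hu : (0:ℝ) < a + y := by linarith
  rw [h1] at h2
  have : a = a' := by
    field_simp at h2
    exact h2
  exact ⟨this, by linarith⟩

lemma chi_image : chi '' (Ioi (0:ℝ) ×ˢ Ioi (0:ℝ)) = Ioi (0:ℝ) ×ˢ Ioo (0:ℝ) 1 := by
  ext ⟨u, v⟩
  simp only [mem_image, mem_prod, mem_Ioi, mem_Ioo, Prod.exists]
  constructor
  · rintro ⟨a, y, ⟨ha, hy⟩, h⟩
    have hu : 0 < a + y := by linarith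
    simp only [chi, Prod.mk.injEq] at h
    obtain ⟨h1, h2⟩ := h
    subst h1; subst h2
    exact ⟨hu, div_pos ha hu, (div_lt_one hu).2 (by linarith)⟩
  · rintro ⟨hu, hv0, hv1⟩
    refine ⟨u * v, u * (1 - v), ⟨mul_pos hu hv0, mul_pos hu (by linarith)⟩, ?_⟩
    simp only [chi, Prod.mk.injEq]
    constructor
    · ring
    · rw [show u * v + u * (1 - v) = u by ring]
      field_simp



noncomputable def dchi (p : ℝ × ℝ) : ℝ × ℝ →L[ℝ] ℝ × ℝ :=
  LinearMap.toContinuousLinearMap (Matrix.toLin (Module.Basis.finTwoProd ℝ) (Module.Basis.finTwoProd ℝ)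
    !![1, 1; p.2 / (p.1 + p.2) ^ 2, -(p.1 / (p.1 + p.2) ^ 2)])

lemma hasFDerivAt_chi (p : ℝ × ℝ) (hp : p.1 + p.2 ≠ 0) : HasFDerivAt chi (dchi p) p := by
  unfold dchi
  rw [Matrix.toLin_finTwoProd_toContinuousLinearMap]
  have hd : HasFDerivAt (fun q : ℝ × ℝ => q.1 + q.2)
      (ContinuousLinearMap.fst ℝ ℝ ℝ + ContinuousLinearMap.snd ℝ ℝ ℝ) p :=
    hasFDerivAt_fst.add hasFDerivAt_snd
  have hinv : HasFDerivAt (fun q : ℝ × ℝ => (q.1 + q.2)⁻¹)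
      ((-((p.1 + p.2) ^ 2)⁻¹) • (ContinuousLinearMap.fst ℝ ℝ ℝ + ContinuousLinearMap.snd ℝ ℝ ℝ)) p :=
    (hasDerivAt_inv hp).comp_hasFDerivAt p hd
  have h2 : HasFDerivAt (fun q : ℝ × ℝ => q.1 * (q.1 + q.2)⁻¹)
      (p.1 • ((-((p.1 + p.2) ^ 2)⁻¹) • (ContinuousLinearMap.fst ℝ ℝ ℝ + ContinuousLinearMap.snd ℝ ℝ ℝ))
        + (p.1 + p.2)⁻¹ • ContinuousLinearMap.fst ℝ ℝ ℝ) p :=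
    hasFDerivAt_fst.mul hinv
  have hchi : HasFDerivAt chi
      ((ContinuousLinearMap.fst ℝ ℝ ℝ + ContinuousLinearMap.snd ℝ ℝ ℝ).prod
        (p.1 • ((-((p.1 + p.2) ^ 2)⁻¹) • (ContinuousLinearMap.fst ℝ ℝ ℝ + ContinuousLinearMap.snd ℝ ℝ ℝ))
          + (p.1 + p.2)⁻¹ • ContinuousLinearMap.fst ℝ ℝ ℝ)) p := by
    have : chi = fun q : ℝ × ℝ => (q.1 + q.2, q.1 * (q.1 + q.2)⁻¹) := by
      funext q; simp [chi, div_eq_mul_inv]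
    rw [this]
    exact hd.prodMk h2
  refine hchi.congr_fderiv ?_
  apply ContinuousLinearMap.ext
  rintro ⟨v, w⟩
  simp only [ContinuousLinearMap.prod_apply, ContinuousLinearMap.add_apply,
    ContinuousLinearMap.smul_apply, ContinuousLinearMap.coe_fst', ContinuousLinearMap.coe_snd',
    one_smul, smul_eq_mul, Prod.mk.injEq]
  constructor
  · trivial
  · field_simp
    ring_nf

lemma det_dchi (p : ℝ × ℝ) (hp : p.1 + p.2 ≠ 0) : (dchi p).det = -((p.1 + p.2)⁻¹) := by
  simp only [dchi, LinearMap.det_toContinuousLinearMap, LinearMap.det_toLin,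
    Matrix.det_fin_two_of]
  field_simp
  ring

lemma gpdf_nonneg {a b : ℝ} (ha : 0 < a) (hb : 0 < b) (x : ℝ) : 0 ≤ gpdf a b x := by
  unfold gpdf
  split
  · have := Real.Gamma_pos_of_pos ha
    positivity
  · exact le_refl 0
  
lemma bpdf_nonneg {a b : ℝ} (ha : 0 < a) (hb : 0 < b) (x : ℝ) : 0 ≤ bpdf a b x := by
  unfold bpdf
  split
  · rename_i h
    have h1 := Real.Gamma_pos_of_pos ha
    have h2 := Real.Gamma_pos_of_pos hb
    have h3 := Real.Gamma_pos_of_pos (by linarith : 0 < a + b)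
    have h4 : (0:ℝ) < x := h.1
    have h5 : (0:ℝ) < 1 - x := by linarith [h.2]
    positivity
  · exact le_refl 0

lemma prod_wd (f g : ℝ → ℝ) (hf : Measurable f) (hg : Measurable g) :
    (volume.withDensity fun x => ENNReal.ofReal (f x)).prod
      (volume.withDensity fun y => ENNReal.ofReal (g y)) =
    (volume : Measure (ℝ × ℝ)).withDensity
      (fun p => ENNReal.ofReal (f p.1) * ENNReal.ofReal (g p.2)) := by
  refine Measure.prod_eq fun s t hs ht => ?_
  rw [withDensity_apply _ (hs.prod ht), Measure.volume_eq_prod, ← Measure.prod_restrict,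
    lintegral_prod_mul hf.ennreal_ofReal.aemeasurable hg.ennreal_ofReal.aemeasurable,
    withDensity_apply _ hs, withDensity_apply _ ht]

lemma key_lemma {l m b : ℝ} (hl : 0 < l) (hm : 0 < m) (hb : 0 < b) :
    ((volume.withDensity fun x => ENNReal.ofReal (gpdf l b x)).prod
      (volume.withDensity fun y => ENNReal.ofReal (gpdf m b y))).map chi
    = (volume.withDensity fun x => ENNReal.ofReal (gpdf (m + l) b x)).prod
      (volume.withDensity fun y => ENNReal.ofReal (bpdf l m y)) := by
  rw [prod_wd _ _ (measurable_gpdf l b) (measurable_gpdf m b),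
      prod_wd _ _ (measurable_gpdf (m+l) b) (measurable_bpdf l m)]
  set D1 : ℝ × ℝ → ℝ≥0∞ := fun p => ENNReal.ofReal (gpdf l b p.1) * ENNReal.ofReal (gpdf m b p.2)
    with hD1
  set D2 : ℝ × ℝ → ℝ≥0∞ := fun p => ENNReal.ofReal (gpdf (m+l) b p.1) * ENNReal.ofReal (bpdf l m p.2)
    with hD2
  have hD1m : Measurable D1 :=
    ((measurable_gpdf l b).comp measurable_fst).ennreal_ofReal.mul
      (((measurable_gpdf m b).comp measurable_snd).ennreal_ofReal)
  have hD2m : Measurable D2 :=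
    ((measurable_gpdf (m+l) b).comp measurable_fst).ennreal_ofReal.mul
      (((measurable_bpdf l m).comp measurable_snd).ennreal_ofReal)
  have hchim : Measurable chi :=
    (measurable_fst.add measurable_snd).prodMk
      (measurable_fst.div (measurable_fst.add measurable_snd))
  have hSmeas : MeasurableSet (Ioi (0:ℝ) ×ˢ Ioi (0:ℝ)) := measurableSet_Ioi.prod measurableSet_Ioi
  have hTmeas : MeasurableSet (Ioi (0:ℝ) ×ˢ Ioo (0:ℝ) 1) := measurableSet_Ioi.prod measurableSet_Ioo
  -- D1 vanishes off S, D2 off T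
  have hD1z : ∀ p : ℝ × ℝ, p ∉ Ioi (0:ℝ) ×ˢ Ioi (0:ℝ) → D1 p = 0 := by
    rintro ⟨a, y⟩ hp
    simp only [mem_prod, mem_Ioi, not_and_or, not_lt] at hp
    rcases hp with h | h
    · simp [hD1, gpdf_eq_zero (not_lt.2 h)]
    · simp [hD1, gpdf_eq_zero (not_lt.2 h)]
  have hD2z : ∀ p : ℝ × ℝ, p ∉ Ioi (0:ℝ) ×ˢ Ioo (0:ℝ) 1 → D2 p = 0 := by
    rintro ⟨u, v⟩ hp
    simp only [mem_prod, mem_Ioi, mem_Ioo, not_and_or, not_lt] at hp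
    rcases hp with h | h
    · simp [hD2, gpdf_eq_zero (not_lt.2 h)]
    · have : ¬ (0 < v ∧ v < 1) := by
        rcases h with h | h
        · exact fun hc => absurd hc.1 (not_lt.2 h)
        · exact fun hc => absurd hc.2 (not_lt.2 h)
      simp [hD2, bpdf_eq_zero this]
  ext t ht
  rw [Measure.map_apply hchim ht, withDensity_apply _ (hchim ht), withDensity_apply _ ht]
  -- restrict both sides to S and T resp.
  have hL : ∫⁻ p in chi ⁻¹' t, D1 p = ∫⁻ p in Ioi (0:ℝ) ×ˢ Ioi (0:ℝ), (chi ⁻¹' t).indicator D1 p := by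
    rw [← lintegral_indicator (hchim ht) _, ← lintegral_indicator hSmeas _]
    congr 1
    funext p
    by_cases hp : p ∈ Ioi (0:ℝ) ×ˢ Ioi (0:ℝ)
    · rw [indicator_of_mem hp]
    · rw [indicator_of_notMem hp]
      by_cases hpt : p ∈ chi ⁻¹' t
      · rw [indicator_of_mem hpt, hD1z p hp]
      · rw [indicator_of_notMem hpt]
  have hR : ∫⁻ p in t, D2 p = ∫⁻ p in Ioi (0:ℝ) ×ˢ Ioo (0:ℝ) 1, t.indicator D2 p := by
    rw [← lintegral_indicator ht _, ← lintegral_indicator hTmeas _]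
    congr 1
    funext p
    by_cases hp : p ∈ Ioi (0:ℝ) ×ˢ Ioo (0:ℝ) 1
    · rw [indicator_of_mem hp]
    · rw [indicator_of_notMem hp]
      by_cases hpt : p ∈ t
      · rw [indicator_of_mem hpt, hD2z p hp]
      · rw [indicator_of_notMem hpt]
  rw [hL, hR, ← chi_image]
  have hderiv : ∀ p ∈ Ioi (0:ℝ) ×ˢ Ioi (0:ℝ),
      HasFDerivWithinAt chi (dchi p) (Ioi (0:ℝ) ×ˢ Ioi (0:ℝ)) p := by
    rintro ⟨a, y⟩ ⟨ha, hy⟩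
    simp only [mem_Ioi] at ha hy
    exact (hasFDerivAt_chi (a, y) (by simp; linarith)).hasFDerivWithinAt
  rw [lintegral_image_eq_lintegral_abs_det_fderiv_mul volume hSmeas hderiv chi_injOn
    (t.indicator D2)]
  apply setLIntegral_congr_fun hSmeas
  rintro ⟨a, y⟩ ⟨ha, hy⟩
  simp only [mem_Ioi] at ha hy
  have hu : (0:ℝ) < a + y := by linarith
  have hdet : |(dchi (a, y)).det| = (a + y)⁻¹ := by
    rw [det_dchi (a, y) (by simp; linarith), abs_neg, abs_of_pos (by positivity)]
  beta_reduce
  by_cases hpt : chi (a, y) ∈ t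
  · rw [indicator_of_mem hpt, indicator_of_mem (by exact hpt)]
    have hd := density_id hl hm hb ha hy
    simp only [hD1, hD2, chi, hdet]
    rw [← ENNReal.ofReal_mul (gpdf_nonneg hl hb a),
        ← ENNReal.ofReal_mul (gpdf_nonneg (by linarith : (0:ℝ) < m + l) hb (a + y)),
        ← ENNReal.ofReal_mul (by positivity : (0:ℝ) ≤ (a + y)⁻¹)]
    rw [hd]
  · rw [indicator_of_notMem hpt, indicator_of_notMem (by exact hpt), mul_zero]

-- the gamma withDensity measure is a probability measure
lemma gwd_eq_gammaMeasure {a b : ℝ} (ha : 0 < a) (hb : 0 < b) :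
    (volume.withDensity fun x => ENNReal.ofReal (gpdf a b x)) = gammaMeasure a b := by
  unfold gammaMeasure
  apply withDensity_congr_ae
  have hz : (volume : Measure ℝ) {(0:ℝ)} = 0 := measure_singleton 0
  filter_upwards [measure_eq_zero_iff_ae_notMem.mp hz] with x hx
  have hx0 : x ≠ 0 := hx
  unfold gammaPDF gammaPDFReal gpdf
  rcases lt_trichotomy x 0 with h | h | h
  · rw [if_neg (not_lt.2 h.le), if_neg (not_le.2 h)]
  · exact absurd h hx0
  · rw [if_pos h, if_pos h.le]
    congr 1
    ring_nf

lemma gwd_prob {a b : ℝ} (ha : 0 < a) (hb : 0 < b) :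
    IsProbabilityMeasure (volume.withDensity fun x => ENNReal.ofReal (gpdf a b x)) := by
  rw [gwd_eq_gammaMeasure ha hb]; exact isProbabilityMeasure_gammaMeasure ha hb

-- a.e. positivity
lemma gwd_ae_pos (a b : ℝ) :
    ∀ᵐ x ∂(volume.withDensity fun x => ENNReal.ofReal (gpdf a b x)), 0 < x := by
  rw [ae_iff]
  have : {x : ℝ | ¬ 0 < x} = Iic 0 := by ext x; simp
  rw [this, withDensity_apply _ measurableSet_Iic]
  have : ∫⁻ x in Iic (0:ℝ), ENNReal.ofReal (gpdf a b x) = ∫⁻ _ in Iic (0:ℝ), 0 := by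
    apply setLIntegral_congr_fun measurableSet_Iic
    exact fun x (hx : x ∈ Iic (0:ℝ)) => by
      rw [gpdf_eq_zero (not_lt.2 hx), ENNReal.ofReal_zero]
  rw [this, lintegral_zero]

lemma bwd_ae (a b : ℝ) :
    ∀ᵐ x ∂(volume.withDensity fun x => ENNReal.ofReal (bpdf a b x)), 0 < x ∧ x < 1 := by
  rw [ae_iff]
  have hms : MeasurableSet {x : ℝ | ¬ (0 < x ∧ x < 1)} := by
    have : {x : ℝ | ¬ (0 < x ∧ x < 1)} = (Ioo (0:ℝ) 1)ᶜ := by ext x; simp [mem_Ioo]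
    rw [this]; exact measurableSet_Ioo.compl
  rw [withDensity_apply _ hms]
  have : ∫⁻ x in {x : ℝ | ¬ (0 < x ∧ x < 1)}, ENNReal.ofReal (bpdf a b x)
      = ∫⁻ _ in {x : ℝ | ¬ (0 < x ∧ x < 1)}, 0 := by
    apply setLIntegral_congr_fun hms
    exact fun x hx => by
      rw [bpdf_eq_zero hx, ENNReal.ofReal_zero]
  rw [this, lintegral_zero]

section Assembly

variable {l m b : ℝ}

noncomputable def phi (p : ℝ × ℝ) : ℝ × ℝ := (p.1 * p.2, p.1 * (1 - p.2))
noncomputable def psiT (p : ℝ × ℝ) : ℝ × ℝ := (p.2 + p.1, p.2 * p.1⁻¹ + 1)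
noncomputable def invT (p : ℝ × ℝ) : ℝ × ℝ := (p.1, p.2⁻¹)

lemma measurable_phi : Measurable phi :=
  (measurable_fst.mul measurable_snd).prodMk
    (measurable_fst.mul (measurable_const.sub measurable_snd))
lemma measurable_psiT : Measurable psiT :=
  (measurable_snd.add measurable_fst).prodMk
    ((measurable_snd.mul measurable_fst.inv).add measurable_const)
lemma measurable_invT : Measurable invT := measurable_fst.prodMk measurable_snd.inv
lemma measurable_chi' : Measurable chi :=
  (measurable_fst.add measurable_snd).prodMk
    (measurable_fst.div (measurable_fst.add measurable_snd))

-- product of two gammas, ae positivity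
lemma GG_ae (hl : 0 < l) (hm : 0 < m) (hb : 0 < b) :
    ∀ᵐ p ∂((volume.withDensity fun x => ENNReal.ofReal (gpdf l b x)).prod
        (volume.withDensity fun x => ENNReal.ofReal (gpdf m b x))), 0 < p.1 ∧ 0 < p.2 := by
  have h1 := gwd_ae_pos l b
  have h2 := gwd_ae_pos m b
  rw [ae_iff] at h1 h2 ⊢
  have hsub : {p : ℝ × ℝ | ¬ (0 < p.1 ∧ 0 < p.2)}
      ⊆ ({x : ℝ | ¬ 0 < x} ×ˢ univ) ∪ (univ ×ˢ {x : ℝ | ¬ 0 < x}) := by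
    rintro ⟨x, y⟩ hp
    simp only [mem_setOf_eq, not_and_or] at hp
    rcases hp with h | h
    · exact Or.inl ⟨h, mem_univ _⟩
    · exact Or.inr ⟨mem_univ _, h⟩
  apply measure_mono_null hsub
  apply measure_union_null <;> rw [Measure.prod_prod]
  · rw [h1, zero_mul]
  · rw [h2, mul_zero]

lemma map_phi (hl : 0 < l) (hm : 0 < m) (hb : 0 < b) :
    ((volume.withDensity fun x => ENNReal.ofReal (gpdf (m + l) b x)).prod
      (volume.withDensity fun y => ENNReal.ofReal (bpdf l m y))).map phi
    = (volume.withDensity fun x => ENNReal.ofReal (gpdf l b x)).prod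
      (volume.withDensity fun x => ENNReal.ofReal (gpdf m b x)) := by
  rw [← key_lemma hl hm hb, Measure.map_map measurable_phi measurable_chi']
  have : ∀ᵐ p ∂((volume.withDensity fun x => ENNReal.ofReal (gpdf l b x)).prod
      (volume.withDensity fun x => ENNReal.ofReal (gpdf m b x))), (phi ∘ chi) p = id p := by
    filter_upwards [GG_ae hl hm hb] with p hp
    obtain ⟨h1, h2⟩ := hp
    have hu : p.1 + p.2 ≠ 0 := by positivity
    simp only [Function.comp_apply, phi, chi, id]
    have e1 : (p.1 + p.2) * (p.1 / (p.1 + p.2)) = p.1 := by field_simp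
    have e2 : (p.1 + p.2) * (1 - p.1 / (p.1 + p.2)) = p.2 := by field_simp; ring
    rw [e1, e2]
  rw [Measure.map_congr this, Measure.map_id]

lemma map_mul_coord (hl : 0 < l) (hm : 0 < m) (hb : 0 < b) :
    ((volume.withDensity fun x => ENNReal.ofReal (gpdf (m + l) b x)).prod
      (volume.withDensity fun y => ENNReal.ofReal (bpdf l m y))).map (fun p => p.1 * p.2)
    = volume.withDensity fun x => ENNReal.ofReal (gpdf l b x) := by
  have hcomp : (fun p : ℝ × ℝ => p.1 * p.2) = Prod.fst ∘ phi := rfl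
  rw [hcomp, ← Measure.map_map measurable_fst measurable_phi, map_phi hl hm hb,
    Measure.map_fst_prod]
  have : IsProbabilityMeasure (volume.withDensity fun x => ENNReal.ofReal (gpdf m b x)) :=
    gwd_prob hm hb
  simp

lemma map_psiT (hl : 0 < l) (hm : 0 < m) (hb : 0 < b) :
    ((volume.withDensity fun x => ENNReal.ofReal (gpdf l b x)).prod
      (volume.withDensity fun x => ENNReal.ofReal (gpdf m b x))).map psiT
    = ((volume.withDensity fun x => ENNReal.ofReal (gpdf (m + l) b x)).prod
      (volume.withDensity fun y => ENNReal.ofReal (bpdf l m y))).map invT := by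
  have hae : ∀ᵐ p ∂((volume.withDensity fun x => ENNReal.ofReal (gpdf l b x)).prod
      (volume.withDensity fun x => ENNReal.ofReal (gpdf m b x))), psiT p = (invT ∘ chi) p := by
    filter_upwards [GG_ae hl hm hb] with p hp
    obtain ⟨h1, h2⟩ := hp
    have hu : p.1 + p.2 ≠ 0 := by positivity
    have h1' : p.1 ≠ 0 := ne_of_gt h1
    simp only [Function.comp_apply, psiT, invT, chi, Prod.mk.injEq]
    constructor
    · ring
    · rw [inv_div, eq_div_iff h1', add_mul, inv_mul_cancel_right₀ h1', one_mul, add_comm]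
  rw [Measure.map_congr hae, ← Measure.map_map measurable_invT measurable_chi',
    key_lemma hl hm hb]

end Assembly


/-- The Gamma(a, b) distribution, with density `Γ(a)⁻¹ bᵃ x^{a-1} e^{-bx}` on `(0,∞)`. -/
noncomputable def gammaDist (a b : ℝ) : Measure ℝ :=
  volume.withDensity fun x => ENNReal.ofReal
    (if 0 < x then (Real.Gamma a)⁻¹ * b ^ a * x ^ (a - 1) * Real.exp (-(b * x)) else 0)

/-- The Beta(a, b) distribution, with density
`(Γ(a+b)/(Γ(a)Γ(b))) x^{a-1} (1-x)^{b-1}` on `(0,1)`. -/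
noncomputable def betaDist (a b : ℝ) : Measure ℝ :=
  volume.withDensity fun x => ENNReal.ofReal
    (if 0 < x ∧ x < 1 then
      (Real.Gamma (a + b) / (Real.Gamma a * Real.Gamma b)) * x ^ (a - 1) * (1 - x) ^ (b - 1)
    else 0)

/-- invariance of the strict-weak (gamma) model. If `R¹, R², Y` are
independent with `R¹ ~ Ga(μ+λ,β)`, `R² ~ Be⁻¹(λ,μ)`, `Y ~ Ga(μ,β)` (`λ,μ,β > 0`),
then `(Y + R¹/R², Y·R²/R¹ + 1) =ᵈ (R¹, R²)`. -/
theorem stmt_11 {Ω : Type*} [MeasurableSpace Ω] (μ : Measure Ω) [IsProbabilityMeasure μ]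
    (R1 R2 Y : Ω → ℝ) (hR1 : Measurable R1) (hR2 : Measurable R2) (hY : Measurable Y)
    (hind : iIndepFun ![R1, R2, Y] μ)
    (l m b : ℝ) (hl : 0 < l) (hm : 0 < m) (hb : 0 < b)
    (hR1d : μ.map R1 = gammaDist (m + l) b)
    (hR2d : μ.map (fun ω => (R2 ω)⁻¹) = betaDist l m)
    (hYd : μ.map Y = gammaDist m b) :
    μ.map (fun ω => (Y ω + R1 ω / R2 ω, Y ω * R2 ω / R1 ω + 1))
      = μ.map (fun ω => (R1 ω, R2 ω)) := by
  have hgd : ∀ a c : ℝ, gammaDist a c = volume.withDensity fun x => ENNReal.ofReal (gpdf a c x) :=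
    fun a c => rfl
  have hbd : betaDist l m = volume.withDensity fun x => ENNReal.ofReal (bpdf l m x) := rfl
  set P := volume.withDensity fun x => ENNReal.ofReal (gpdf (m + l) b x) with hP
  set Q := volume.withDensity fun x => ENNReal.ofReal (bpdf l m x) with hQ
  set S := volume.withDensity fun x => ENNReal.ofReal (gpdf m b x) with hS
  rw [hgd] at hR1d hYd
  rw [hbd] at hR2d
  -- independence facts
  have hmeas3 : ∀ i, Measurable (![R1, R2, Y] i) := fun i => by
    fin_cases i <;> assumption
  have hInd12 : IndepFun R1 R2 μ := by
    have := hind.indepFun (show (0 : Fin 3) ≠ 1 by decide)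
    simpa using this
  have hInd1inv : IndepFun R1 (fun ω => (R2 ω)⁻¹) μ :=
    hInd12.comp measurable_id measurable_inv
  have hIndpair : IndepFun (fun ω => (R1 ω, R2 ω)) Y μ := by
    have := hind.indepFun_prodMk hmeas3 0 1 2 (by decide) (by decide)
    simpa using this
  have hIndpairinv : IndepFun (fun ω => ((R1 ω, (R2 ω)⁻¹))) Y μ := by
    have := hIndpair.comp (measurable_fst.prodMk measurable_snd.inv) measurable_id
    exact this
  have hpair : μ.map (fun ω => (R1 ω, (R2 ω)⁻¹)) = P.prod Q := by
    rw [(indepFun_iff_map_prod_eq_prod_map_map (g := fun ω => (R2 ω)⁻¹) hR1.aemeasurable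
      hR2.inv.aemeasurable).mp hInd1inv, hR1d, hR2d]
  have hjoint : μ.map (fun ω => ((R1 ω, (R2 ω)⁻¹), Y ω)) = (P.prod Q).prod S := by
    rw [(indepFun_iff_map_prod_eq_prod_map_map (f := fun ω => (R1 ω, (R2 ω)⁻¹))
      (hR1.prodMk hR2.inv).aemeasurable
      hY.aemeasurable).mp hIndpairinv, hpair, hYd]
  -- rewrite LHS as composition
  have hFeq : (fun ω => (Y ω + R1 ω / R2 ω, Y ω * R2 ω / R1 ω + 1))
      = (psiT ∘ Prod.map (fun p : ℝ × ℝ => p.1 * p.2) (id : ℝ → ℝ))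
        ∘ (fun ω => ((R1 ω, (R2 ω)⁻¹), Y ω)) := by
    funext ω
    simp only [Function.comp_apply, Prod.map_apply, psiT, id_eq, Prod.mk.injEq]
    constructor
    · rw [div_eq_mul_inv]
    · rw [mul_inv_rev, inv_inv, div_eq_mul_inv]; ring
  have hGeq : (fun ω => (R1 ω, R2 ω)) = invT ∘ (fun ω => (R1 ω, (R2 ω)⁻¹)) := by
    funext ω
    simp [invT]
  rw [hFeq, hGeq]
  have hmul : Measurable (fun p : ℝ × ℝ => p.1 * p.2) := measurable_fst.mul measurable_snd
  rw [← Measure.map_map (f := fun ω => ((R1 ω, (R2 ω)⁻¹), Y ω))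
    (measurable_psiT.comp (hmul.prodMap measurable_id))
    ((hR1.prodMk hR2.inv).prodMk hY), hjoint,
    ← Measure.map_map (f := fun ω => (R1 ω, (R2 ω)⁻¹)) measurable_invT (hR1.prodMk hR2.inv), hpair,
    ← Measure.map_map measurable_psiT (hmul.prodMap measurable_id),
    ← Measure.map_prod_map _ _ hmul measurable_id, Measure.map_id,
    map_mul_coord hl hm hb, map_psiT hl hm hb]
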